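/- Let L̂ > 0 and m, n ≥ 1. Let (s₀, y₀), (s₁, y₁), …, (s_m, y_m) be pairs in ℝ^n × ℝ^n with s_j ≠ 0, s_jᵀ y_j > 0, and ‖y_j‖² ≤ L̂ · (s_jᵀ y_j) for every j. Define B₀ := (‖y₀‖²/(s₀ᵀ y₀))·I and, for j = 1, …, m, B_j := B_{j−1} − (B_{j−1} s_j s_jᵀ B_{j−1})/(s_jᵀ B_{j−1} s_j) + (y_j y_jᵀ)/(y_jᵀ s_j). Then every B_j is symmetric positive definite and trace(B_m) ≤ (m + n)·L̂. -/

import Mathlib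

open Matrix
noncomputable section

lemma myMulVec_vecMulVec {n : ℕ} (u v x : Fin n → ℝ) :
    (vecMulVec u v).mulVec x = (v ⬝ᵥ x) • u := by
  ext i
  simp only [mulVec, dotProduct, vecMulVec_apply, Pi.smul_apply, smul_eq_mul,
    Finset.sum_mul]
  exact Finset.sum_congr rfl fun j _ => by ring

lemma mySymmDot {n : ℕ} {B : Matrix (Fin n) (Fin n) ℝ} (h : B.IsSymm) (a b : Fin n → ℝ) :
    a ⬝ᵥ B.mulVec b = b ⬝ᵥ B.mulVec a := by
  rw [dotProduct_mulVec, ← mulVec_transpose, h.eq, dotProduct_comm]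

lemma myMul_vecMulVec {n : ℕ} (B : Matrix (Fin n) (Fin n) ℝ) (u v : Fin n → ℝ) :
    B * vecMulVec u v = vecMulVec (B.mulVec u) v := by
  ext i j
  simp only [mul_apply, vecMulVec_apply, mulVec, dotProduct, Finset.sum_mul]
  exact Finset.sum_congr rfl fun k _ => by ring

lemma myVecMulVec_mul {n : ℕ} (B : Matrix (Fin n) (Fin n) ℝ) (u v : Fin n → ℝ) :
    vecMulVec u v * B = vecMulVec u (Bᵀ.mulVec v) := by
  ext i j
  simp only [mul_apply, vecMulVec_apply, mulVec, transpose_apply, dotProduct, Finset.mul_sum]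
  exact Finset.sum_congr rfl fun k _ => by ring

lemma myTrace_vecMulVec {n : ℕ} (u v : Fin n → ℝ) :
    (vecMulVec u v).trace = u ⬝ᵥ v := by
  simp [Matrix.trace, Matrix.diag, vecMulVec_apply, dotProduct]

lemma myVecMulVec_transpose {n : ℕ} (u v : Fin n → ℝ) :
    (vecMulVec u v)ᵀ = vecMulVec v u := by
  ext i j; simp [vecMulVec_apply, mul_comm]

lemma myIsSymm_hermitian {n : ℕ} {B : Matrix (Fin n) (Fin n) ℝ} (h : B.IsSymm) :
    B.IsHermitian := by
  rwa [Matrix.IsHermitian, conjTranspose_eq_transpose_of_trivial]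

lemma myDotSelf_nonneg {n : ℕ} (v : Fin n → ℝ) : 0 ≤ v ⬝ᵥ v :=
  Finset.sum_nonneg fun i _ => mul_self_nonneg _

lemma bfgs_step {n : ℕ} (B : Matrix (Fin n) (Fin n) ℝ) (hsymm : B.IsSymm) (hpd : B.PosDef)
    (s y : Fin n → ℝ) (hs : s ≠ 0) (hsy : 0 < s ⬝ᵥ y) :
    (B - (s ⬝ᵥ B.mulVec s)⁻¹ • (B * vecMulVec s s * B) + (y ⬝ᵥ s)⁻¹ • vecMulVec y y).IsSymm ∧
    (B - (s ⬝ᵥ B.mulVec s)⁻¹ • (B * vecMulVec s s * B) + (y ⬝ᵥ s)⁻¹ • vecMulVec y y).PosDef ∧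
    (B - (s ⬝ᵥ B.mulVec s)⁻¹ • (B * vecMulVec s s * B) + (y ⬝ᵥ s)⁻¹ • vecMulVec y y).trace
      ≤ B.trace + (y ⬝ᵥ y) / (s ⬝ᵥ y) := by
  have hq : ∀ z : Fin n → ℝ, z ≠ 0 → 0 < z ⬝ᵥ B.mulVec z := by
    intro z hz
    simpa using hpd.dotProduct_mulVec_pos hz
  have hq0 : ∀ z : Fin n → ℝ, 0 ≤ z ⬝ᵥ B.mulVec z := by
    intro z
    simpa using hpd.posSemidef.dotProduct_mulVec_nonneg z
  set c : ℝ := s ⬝ᵥ B.mulVec s with hcdef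
  have hc : 0 < c := hq s hs
  have hmid : B * vecMulVec s s * B = vecMulVec (B.mulVec s) (B.mulVec s) := by
    rw [myMul_vecMulVec, myVecMulVec_mul, hsymm.eq]
  have hys : y ⬝ᵥ s = s ⬝ᵥ y := dotProduct_comm _ _
  -- quadratic form formula
  have hquad : ∀ x : Fin n → ℝ,
      x ⬝ᵥ (B - c⁻¹ • (B * vecMulVec s s * B) + (y ⬝ᵥ s)⁻¹ • vecMulVec y y).mulVec x
        = x ⬝ᵥ B.mulVec x - c⁻¹ * (s ⬝ᵥ B.mulVec x)^2 + (s ⬝ᵥ y)⁻¹ * (y ⬝ᵥ x)^2 := by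
    intro x
    rw [add_mulVec, sub_mulVec, smul_mulVec, smul_mulVec, hmid,
      myMulVec_vecMulVec, myMulVec_vecMulVec, dotProduct_add, dotProduct_sub,
      dotProduct_smul, dotProduct_smul, dotProduct_smul, dotProduct_smul, hys]
    have h1 : B.mulVec s ⬝ᵥ x = s ⬝ᵥ B.mulVec x := by
      rw [dotProduct_comm]; exact mySymmDot hsymm x s
    have h2 : x ⬝ᵥ B.mulVec s = s ⬝ᵥ B.mulVec x := mySymmDot hsymm x s
    have h3 : x ⬝ᵥ y = y ⬝ᵥ x := dotProduct_comm _ _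
    rw [h1, h2, h3]
    ring_nf
  constructor
  · unfold Matrix.IsSymm
    rw [transpose_add, transpose_sub, transpose_smul, transpose_smul, hmid,
      myVecMulVec_transpose, myVecMulVec_transpose, hsymm.eq]
  constructor
  · refine posDef_iff_dotProduct_mulVec.mpr ⟨myIsSymm_hermitian ?_, ?_⟩
    · unfold Matrix.IsSymm
      rw [transpose_add, transpose_sub, transpose_smul, transpose_smul, hmid,
        myVecMulVec_transpose, myVecMulVec_transpose, hsymm.eq]
    · intro x hx
      have key := hquad x
      set t : ℝ := (s ⬝ᵥ B.mulVec x) / c with htdef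
      set w : Fin n → ℝ := x - t • s with hwdef
      have hw : w ⬝ᵥ B.mulVec w = x ⬝ᵥ B.mulVec x - c⁻¹ * (s ⬝ᵥ B.mulVec x)^2 := by
        rw [hwdef, mulVec_sub, mulVec_smul, sub_dotProduct, dotProduct_sub,
          dotProduct_sub, smul_dotProduct, dotProduct_smul, dotProduct_smul,
          smul_dotProduct]
        have h2 : x ⬝ᵥ B.mulVec s = s ⬝ᵥ B.mulVec x := mySymmDot hsymm x s
        rw [h2, htdef, ← hcdef]
        simp only [smul_eq_mul]
        field_simp
        ring
      have hfinal : x ⬝ᵥ (B - c⁻¹ • (B * vecMulVec s s * B)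
            + (y ⬝ᵥ s)⁻¹ • vecMulVec y y).mulVec x
          = w ⬝ᵥ B.mulVec w + (s ⬝ᵥ y)⁻¹ * (y ⬝ᵥ x)^2 := by
        rw [key, hw]
      show (0 : ℝ) < _
      simp only [star_trivial]
      rw [hfinal]
      rcases eq_or_ne w 0 with hw0 | hw0
      · have hxts : x = t • s := by
          have := hw0
          rw [hwdef] at this
          linear_combination (norm := module) this
        have ht0 : t ≠ 0 := by
          intro h
          apply hx
          rw [hxts, h, zero_smul]
        have hyx : y ⬝ᵥ x = t * (s ⬝ᵥ y) := by
          rw [hxts, dotProduct_smul, smul_eq_mul, dotProduct_comm]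
        have hne : y ⬝ᵥ x ≠ 0 := by
          rw [hyx]
          exact mul_ne_zero ht0 hsy.ne'
        have hpos : 0 < (s ⬝ᵥ y)⁻¹ * (y ⬝ᵥ x)^2 :=
          mul_pos (inv_pos.mpr hsy)
            (lt_of_le_of_ne (sq_nonneg _) (Ne.symm (pow_ne_zero 2 hne)))
        have hzero : w ⬝ᵥ B.mulVec w = 0 := by rw [hw0]; simp
        linarith
      · have h1 : 0 < w ⬝ᵥ B.mulVec w := hq w hw0
        have h2 : 0 ≤ (s ⬝ᵥ y)⁻¹ * (y ⬝ᵥ x)^2 :=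
          mul_nonneg (inv_nonneg.mpr hsy.le) (sq_nonneg _)
        linarith
  · rw [trace_add, trace_sub, trace_smul, trace_smul, hmid, myTrace_vecMulVec,
      myTrace_vecMulVec, hys]
    have h1 : 0 ≤ c⁻¹ • (B.mulVec s ⬝ᵥ B.mulVec s) :=
      smul_nonneg (inv_nonneg.mpr hc.le) (myDotSelf_nonneg _)
    have h2 : (s ⬝ᵥ y)⁻¹ • (y ⬝ᵥ y) = (y ⬝ᵥ y) / (s ⬝ᵥ y) := by
      rw [smul_eq_mul, div_eq_inv_mul]
    rw [h2]
    linarith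

/-- The m-step direct (L-)BFGS recursion started from a scaled
identity produces symmetric positive definite matrices whose final trace is at
most `(m + n)·L̂`. -/
theorem lbfgs_trace_bound
    {n : ℕ} (m : ℕ) (hm : 1 ≤ m) (hn : 1 ≤ n) (Lhat : ℝ) (hL : 0 < Lhat)
    (s y : ℕ → (Fin n → ℝ))
    (hs : ∀ j, j ≤ m → s j ≠ 0)
    (hsy : ∀ j, j ≤ m → 0 < s j ⬝ᵥ y j)
    (hyL : ∀ j, j ≤ m → y j ⬝ᵥ y j ≤ Lhat * (s j ⬝ᵥ y j))
    (B : ℕ → Matrix (Fin n) (Fin n) ℝ)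
    (hB0 : B 0 = ((y 0 ⬝ᵥ y 0) / (s 0 ⬝ᵥ y 0)) • (1 : Matrix (Fin n) (Fin n) ℝ))
    (hBstep : ∀ j, 1 ≤ j → j ≤ m →
      B j = B (j - 1)
        - (s j ⬝ᵥ (B (j - 1)).mulVec (s j))⁻¹
            • (B (j - 1) * vecMulVec (s j) (s j) * B (j - 1))
        + (y j ⬝ᵥ s j)⁻¹ • vecMulVec (y j) (y j)) :
    (∀ j, j ≤ m → (B j).IsSymm ∧ (B j).PosDef) ∧
      (B m).trace ≤ (m + n : ℝ) * Lhat := by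
  have key : ∀ j, j ≤ m →
      (B j).IsSymm ∧ (B j).PosDef ∧ (B j).trace ≤ ((j : ℝ) + n) * Lhat := by
    intro j
    induction j with
    | zero =>
      intro _
      have hs0 : 0 < s 0 ⬝ᵥ y 0 := hsy 0 (Nat.zero_le m)
      have hy0 : y 0 ≠ 0 := by
        intro h
        rw [h, dotProduct_zero] at hs0
        exact lt_irrefl 0 hs0
      have hyy : 0 < y 0 ⬝ᵥ y 0 :=
        lt_of_le_of_ne (myDotSelf_nonneg _) (Ne.symm (mt dotProduct_self_eq_zero.mp hy0))
      set c : ℝ := (y 0 ⬝ᵥ y 0) / (s 0 ⬝ᵥ y 0) with hcdef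
      have hc : 0 < c := div_pos hyy hs0
      have hcL : c ≤ Lhat := by
        rw [hcdef, div_le_iff₀ hs0]
        exact hyL 0 (Nat.zero_le m)
      have hsymm : (B 0).IsSymm := by
        rw [hB0]
        unfold Matrix.IsSymm
        rw [transpose_smul, transpose_one]
      refine ⟨hsymm, posDef_iff_dotProduct_mulVec.mpr ⟨myIsSymm_hermitian hsymm, ?_⟩, ?_⟩
      · intro x hx
        have hxx : 0 < x ⬝ᵥ x :=
          lt_of_le_of_ne (myDotSelf_nonneg _) (Ne.symm (mt dotProduct_self_eq_zero.mp hx))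
        show (0:ℝ) < _
        simp only [star_trivial, hB0, smul_mulVec, one_mulVec, dotProduct_smul,
          smul_eq_mul]
        exact mul_pos hc hxx
      · rw [hB0, trace_smul, trace_one, smul_eq_mul]
        have : c * (Fintype.card (Fin n) : ℝ) ≤ Lhat * n := by
          simp only [Fintype.card_fin]
          exact mul_le_mul_of_nonneg_right hcL (Nat.cast_nonneg n)
        push_cast at this ⊢
        nlinarith
    | succ k ih =>
      intro hkm
      obtain ⟨hsymm, hpd, htr⟩ := ih (le_trans (Nat.le_succ k) hkm)
      have hstep := hBstep (k + 1) (Nat.succ_le_succ (Nat.zero_le k)) hkm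
      simp only [Nat.add_sub_cancel] at hstep
      obtain ⟨hsymm', hpd', htr'⟩ :=
        bfgs_step (B k) hsymm hpd (s (k + 1)) (y (k + 1)) (hs _ hkm) (hsy _ hkm)
      rw [← hstep] at hsymm' hpd' htr'
      refine ⟨hsymm', hpd', ?_⟩
      have hdiv : (y (k+1) ⬝ᵥ y (k+1)) / (s (k+1) ⬝ᵥ y (k+1)) ≤ Lhat := by
        rw [div_le_iff₀ (hsy _ hkm)]
        exact hyL _ hkm
      push_cast
      push_cast at htr
      linarith
  refine ⟨fun j hj => ⟨(key j hj).1, (key j hj).2.1⟩, ?_⟩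
  have := (key m le_rfl).2.2
  push_cast at this ⊢
  linarith
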